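/- Let (B, ψ, A) be a quantum graph on a quantum set with δ-form ψ, and define the graph gradient ∇_A : B → B ⊗ B by ∇_A = δ⁻²(A† ⊗ id_B − id_B ⊗ A)∘m†. If A is real (i.e. the associated operator is *-preserving and corresponds to a B-B-bimodule projection P_A on B ⊗ B), then ∇_A = P_A ∘ (1 ⊗ (·) − (·) ⊗ 1), and consequently P_A ∘ ∇_A = ∇_A, i.e. the range of ∇_A is contained in the edge space ran(P_A). -/
import Mathlib


open TensorProduct

/-- The linear functional on `B ⊗ B` given by `ξ ↦ ⟨(pairing against b, c)⟩`, i.e. the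
linear extension of `x ⊗ y ↦ ψ(b·x)·ψ(c·y)`.  Applied with `b = star b'`, `c = star c'`
this is the GNS inner product `⟨b' ⊗ c', ·⟩` on `B ⊗ B`. -/
noncomputable def pairQ (B : Type*) [Ring B] [Algebra ℂ B]
    (ψ : B →ₗ[ℂ] ℂ) (b c : B) : TensorProduct ℂ B B →ₗ[ℂ] ℂ :=
  TensorProduct.lift ((LinearMap.mul ℂ ℂ).compl₁₂
    (ψ ∘ₗ LinearMap.mulLeft ℂ b) (ψ ∘ₗ LinearMap.mulLeft ℂ c))

set_option maxHeartbeats 3200000 in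
/-- For a real quantum graph `(B, ψ, A)` on a quantum set with
`δ`-form `ψ`, comultiplication `m†` (adjoint of multiplication), GNS adjoint `A†`,
associated bimodule projection `P_A = δ⁻²(id ⊗ m)(id ⊗ A ⊗ id)(m† ⊗ id)` and graph
gradient `∇_A = δ⁻²(A† ⊗ id − id ⊗ A)∘m†`, one has
`∇_A = P_A ∘ (1 ⊗ (·) − (·) ⊗ 1)`, and consequently `P_A ∘ ∇_A = ∇_A`. -/
theorem gradient_range_in_edge_space
    (B : Type*) [NormedRing B] [StarRing B] [CStarRing B] [NormedAlgebra ℂ B]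
    [StarModule ℂ B] [FiniteDimensional ℂ B]
    (ψ : B →ₗ[ℂ] ℂ)
    (hψ1 : ψ 1 = 1)
    (hψpos : ∀ x : B, 0 ≤ (ψ (star x * x)).re ∧ (ψ (star x * x)).im = 0)
    (hψfaith : ∀ x : B, ψ (star x * x) = 0 → x = 0)
    (δ : ℝ) (hδ : 0 < δ)
    (mdag : B →ₗ[ℂ] TensorProduct ℂ B B)
    (hmdag : ∀ a b c : B, pairQ B ψ (star b) (star c) (mdag a) = ψ (star (b * c) * a))
    (hδform : LinearMap.mul' ℂ B ∘ₗ mdag = ((δ : ℂ) ^ 2) • LinearMap.id)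
    (A Adag : B →ₗ[ℂ] B)
    (hSchur : ((δ : ℂ) ^ 2) • A = LinearMap.mul' ℂ B ∘ₗ TensorProduct.map A A ∘ₗ mdag)
    (hreal : ∀ x : B, A (star x) = star (A x))
    (hAdag : ∀ x y : B, ψ (star (A x) * y) = ψ (star x * Adag y))
    (PA : TensorProduct ℂ B B →ₗ[ℂ] TensorProduct ℂ B B)
    (hPA : PA = (((δ : ℂ) ^ 2)⁻¹) •
      (TensorProduct.map LinearMap.id (LinearMap.mul' ℂ B)
        ∘ₗ (TensorProduct.assoc ℂ B B B).toLinearMap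
        ∘ₗ TensorProduct.map (TensorProduct.map LinearMap.id A) LinearMap.id
        ∘ₗ TensorProduct.map mdag LinearMap.id))
    (nabla : B →ₗ[ℂ] TensorProduct ℂ B B)
    (hnabla : nabla = (((δ : ℂ) ^ 2)⁻¹) •
      ((TensorProduct.map Adag LinearMap.id - TensorProduct.map LinearMap.id A) ∘ₗ mdag)) :
    nabla = PA ∘ₗ ((TensorProduct.mk ℂ B B) 1 - (TensorProduct.mk ℂ B B).flip 1) ∧
      PA ∘ₗ nabla = nabla := by
  classical
  have pair_tmul : ∀ b c x y : B, pairQ B ψ b c (x ⊗ₜ[ℂ] y) = ψ (b * x) * ψ (c * y) := by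
    intro b c x y; simp [pairQ]
  -- no-star version of hmdag
  have hmdag' : ∀ a b c : B, pairQ B ψ b c (mdag a) = ψ (c * b * a) := by
    intro a b c
    have h := hmdag a (star b) (star c)
    rw [star_star, star_star] at h
    rw [h, star_mul, star_star, star_star]
  -- faithfulness (both slots) for the bilinear form ψ(x*y)
  have faithR : ∀ u : B, (∀ b, ψ (b * u) = 0) → u = 0 := by
    intro u h; exact hψfaith u (h (star u))
  have faithL : ∀ d : B, (∀ y, ψ (d * y) = 0) → d = 0 := by
    intro d h
    have h2 : ψ (star (star d) * star d) = 0 := by rw [star_star]; exact h (star d)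
    have h3 := hψfaith _ h2
    rw [← star_star d, h3, star_zero]
  -- surjectivity onto the dual: every functional is ψ(d * ·)
  have surjL : ∀ L : B →ₗ[ℂ] ℂ, ∃ d : B, ∀ y, ψ (d * y) = L y := by
    intro L
    set Φ : B →ₗ[ℂ] Module.Dual ℂ B :=
      (LinearMap.llcomp ℂ B B ℂ ψ) ∘ₗ (LinearMap.mul ℂ B) with hΦ
    have hΦapp : ∀ d y : B, Φ d y = ψ (d * y) := fun d y => rfl
    have hinj : Function.Injective Φ := by
      rw [← LinearMap.ker_eq_bot, LinearMap.ker_eq_bot']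
      intro d hd
      exact faithL d fun y => by
        have := congrArg (fun (f : Module.Dual ℂ B) => f y) hd
        simpa [hΦapp] using this
    have hsurj : Function.Surjective Φ :=
      (LinearMap.injective_iff_surjective_of_finrank_eq_finrank
        Subspace.dual_finrank_eq.symm).mp hinj
    obtain ⟨d, hd⟩ := hsurj L
    exact ⟨d, fun y => by rw [← hd]; rfl⟩
  -- basis and "dual" elements
  let e := Module.finBasis ℂ B
  choose dl hdl using fun i => surjL (e.coord i)
  -- contraction of the first tensor leg
  let contr : ∀ {M : Type _} [AddCommGroup M] [Module ℂ M], B → (TensorProduct ℂ B M →ₗ[ℂ] M) :=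
    fun {M} _ _ b => (TensorProduct.lid ℂ M).toLinearMap ∘ₗ
      TensorProduct.map (ψ ∘ₗ LinearMap.mulLeft ℂ b) LinearMap.id
  have contr_tmul : ∀ {M : Type _} [AddCommGroup M] [Module ℂ M] (b x : B) (t : M),
      contr b (x ⊗ₜ[ℂ] t) = ψ (b * x) • t := by
    intro M _ _ b x t; simp [contr]
  -- expansion of any element of B ⊗ M along the basis e
  have expand : ∀ {M : Type _} [AddCommGroup M] [Module ℂ M] (u : TensorProduct ℂ B M),
      u = ∑ i, e i ⊗ₜ[ℂ] contr (dl i) u := by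
    intro M _ _ u
    induction u using TensorProduct.induction_on with
    | zero =>
        have : ∀ i, contr (dl i) (0 : TensorProduct ℂ B M) = 0 := fun i => map_zero _
        simp only [this, TensorProduct.tmul_zero, Finset.sum_const_zero]
    | tmul x t =>
        have hc : ∀ i, contr (dl i) (x ⊗ₜ[ℂ] t) = e.repr x i • t := by
          intro i; rw [contr_tmul, hdl i x]; rfl
        calc x ⊗ₜ[ℂ] t = (∑ i, e.repr x i • e i) ⊗ₜ[ℂ] t := by rw [e.sum_repr x]
          _ = ∑ i, (e.repr x i • e i) ⊗ₜ[ℂ] t := by rw [TensorProduct.sum_tmul]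
          _ = ∑ i, e i ⊗ₜ[ℂ] contr (dl i) (x ⊗ₜ[ℂ] t) := by
              refine Finset.sum_congr rfl fun i _ => ?_
              rw [hc i, TensorProduct.smul_tmul]
    | add u v hu hv =>
        conv_lhs => rw [hu, hv]
        rw [← Finset.sum_add_distrib]
        exact Finset.sum_congr rfl fun i _ => by rw [map_add, TensorProduct.tmul_add]
  -- injectivity via contractions
  have injC : ∀ {M : Type _} [AddCommGroup M] [Module ℂ M] (u v : TensorProduct ℂ B M),
      (∀ b, contr b u = contr b v) → u = v := by
    intro M _ _ u v h
    rw [expand u, expand v]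
    exact Finset.sum_congr rfl fun i _ => by rw [h (dl i)]
  -- pairQ in terms of contraction
  have pair_contr : ∀ (b c : B) (u : TensorProduct ℂ B B),
      pairQ B ψ b c u = ψ (c * contr b u) := by
    intro b c u
    induction u using TensorProduct.induction_on with
    | zero => rw [map_zero, map_zero, mul_zero, map_zero]
    | tmul x y => rw [pair_tmul, contr_tmul, mul_smul_comm, map_smul, smul_eq_mul]
    | add u v hu hv => rw [map_add, map_add, mul_add, map_add, hu, hv]
  -- nondegeneracy on B ⊗ B
  have nd2 : ∀ u v : TensorProduct ℂ B B,
      (∀ b c, pairQ B ψ b c u = pairQ B ψ b c v) → u = v := by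
    intro u v h
    refine injC u v fun b => ?_
    have hz : ∀ c, ψ (c * (contr b u - contr b v)) = 0 := by
      intro c
      have hbc := h b c
      rw [pair_contr, pair_contr] at hbc
      rw [mul_sub, map_sub, hbc, sub_self]
    have h0 := faithR _ hz
    exact sub_eq_zero.mp h0
  -- coassociativity of mdag
  have coassoc : ∀ a : B,
      (TensorProduct.assoc ℂ B B B).toLinearMap
          ((TensorProduct.map mdag LinearMap.id) (mdag a))
        = (TensorProduct.map LinearMap.id mdag) (mdag a) := by
    intro a
    refine injC _ _ fun b => ?_
    refine nd2 _ _ fun c d' => ?_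
    have E1 : ∀ t : TensorProduct ℂ B B,
        pairQ B ψ c d' (contr b ((TensorProduct.assoc ℂ B B B).toLinearMap
            ((TensorProduct.map mdag LinearMap.id) t)))
          = pairQ B ψ (c * b) d' t := by
      intro t
      induction t using TensorProduct.induction_on with
      | zero => simp only [_root_.map_zero]
      | tmul u w =>
          have inner : ∀ s : TensorProduct ℂ B B,
              pairQ B ψ c d' (contr b ((TensorProduct.assoc ℂ B B B).toLinearMap
                  (s ⊗ₜ[ℂ] w)))
                = pairQ B ψ b c s * ψ (d' * w) := by
            intro s
            induction s using TensorProduct.induction_on with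
            | zero => simp only [_root_.map_zero, TensorProduct.zero_tmul, zero_mul]
            | tmul x y =>
                rw [show (TensorProduct.assoc ℂ B B B).toLinearMap ((x ⊗ₜ[ℂ] y) ⊗ₜ[ℂ] w)
                    = x ⊗ₜ[ℂ] (y ⊗ₜ[ℂ] w) from TensorProduct.assoc_tmul x y w,
                  contr_tmul, map_smul, pair_tmul, pair_tmul, smul_eq_mul]
                ring
            | add s₁ s₂ h₁ h₂ =>
                simp only [TensorProduct.add_tmul, _root_.map_add, add_mul]
                rw [h₁, h₂]
          rw [show (TensorProduct.map mdag LinearMap.id) (u ⊗ₜ[ℂ] w)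
              = (mdag u) ⊗ₜ[ℂ] w from TensorProduct.map_tmul mdag LinearMap.id u w,
            inner (mdag u), hmdag', pair_tmul]
      | add t₁ t₂ h₁ h₂ =>
          simp only [_root_.map_add]
          rw [h₁, h₂]
    have E2 : ∀ t : TensorProduct ℂ B B,
        pairQ B ψ c d' (contr b ((TensorProduct.map LinearMap.id mdag) t))
          = pairQ B ψ b (d' * c) t := by
      intro t
      induction t using TensorProduct.induction_on with
      | zero => simp only [_root_.map_zero]
      | tmul x y =>
          rw [show (TensorProduct.map LinearMap.id mdag) (x ⊗ₜ[ℂ] y)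
              = x ⊗ₜ[ℂ] (mdag y) from TensorProduct.map_tmul LinearMap.id mdag x y,
            contr_tmul, map_smul, hmdag', pair_tmul, smul_eq_mul]
      | add t₁ t₂ h₁ h₂ =>
          simp only [_root_.map_add]
          rw [h₁, h₂]
    rw [E1 (mdag a), E2 (mdag a), hmdag', hmdag', ← mul_assoc d' c b]
  -- A and Adag are adjoint for the bilinear form ψ(x * y)
  have βadj : ∀ p q : B, ψ (A p * q) = ψ (p * Adag q) := by
    intro p q
    have h := hAdag (star p) q
    rw [hreal p, star_star, star_star] at h
    exact h
  -- the key identity using realness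
  have keyG : ∀ x : B,
      (TensorProduct.map LinearMap.id ((LinearMap.mulRight ℂ x) ∘ₗ A)) (mdag 1)
        = (TensorProduct.map Adag LinearMap.id) (mdag x) := by
    intro x
    refine nd2 _ _ fun b c => ?_
    obtain ⟨d, hd⟩ := surjL (ψ ∘ₗ LinearMap.mulLeft ℂ c ∘ₗ LinearMap.mulRight ℂ x ∘ₗ A)
    have hd' : ∀ y, ψ (d * y) = ψ (c * (A y * x)) := fun y => hd y
    have L1 : ∀ t : TensorProduct ℂ B B,
        pairQ B ψ b c ((TensorProduct.map LinearMap.id ((LinearMap.mulRight ℂ x) ∘ₗ A)) t)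
          = pairQ B ψ b d t := by
      intro t
      induction t using TensorProduct.induction_on with
      | zero => simp only [_root_.map_zero]
      | tmul u v =>
          rw [show (TensorProduct.map LinearMap.id ((LinearMap.mulRight ℂ x) ∘ₗ A))
                (u ⊗ₜ[ℂ] v) = u ⊗ₜ[ℂ] (A v * x) from
              TensorProduct.map_tmul _ _ u v,
            pair_tmul, pair_tmul, hd' v]
      | add t₁ t₂ h₁ h₂ =>
          simp only [_root_.map_add]
          rw [h₁, h₂]
    have L2 : ∀ t : TensorProduct ℂ B B,
        pairQ B ψ b c ((TensorProduct.map Adag LinearMap.id) t)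
          = pairQ B ψ (A b) c t := by
      intro t
      induction t using TensorProduct.induction_on with
      | zero => simp only [_root_.map_zero]
      | tmul u v =>
          rw [show (TensorProduct.map Adag LinearMap.id) (u ⊗ₜ[ℂ] v)
              = (Adag u) ⊗ₜ[ℂ] v from TensorProduct.map_tmul Adag LinearMap.id u v,
            pair_tmul, pair_tmul, ← βadj]
      | add t₁ t₂ h₁ h₂ =>
          simp only [_root_.map_add]
          rw [h₁, h₂]
    rw [L1 (mdag 1), L2 (mdag x), hmdag', hmdag', mul_one, hd' b, mul_assoc]
  -- the (unnormalized) projection Q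
  set Q : TensorProduct ℂ B B →ₗ[ℂ] TensorProduct ℂ B B :=
    TensorProduct.map LinearMap.id (LinearMap.mul' ℂ B)
      ∘ₗ (TensorProduct.assoc ℂ B B B).toLinearMap
      ∘ₗ TensorProduct.map (TensorProduct.map LinearMap.id A) LinearMap.id
      ∘ₗ TensorProduct.map mdag LinearMap.id with hQdef
  have hPAQ : ∀ u, PA u = (((δ : ℂ) ^ 2)⁻¹) • Q u := by
    intro u; rw [hPA]; rfl
  have Qtmul : ∀ u w : B, Q (u ⊗ₜ[ℂ] w)
      = (TensorProduct.map LinearMap.id ((LinearMap.mulRight ℂ w) ∘ₗ A)) (mdag u) := by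
    intro u w
    have inner : ∀ s : TensorProduct ℂ B B,
        (TensorProduct.map LinearMap.id (LinearMap.mul' ℂ B))
            ((TensorProduct.assoc ℂ B B B).toLinearMap
              ((TensorProduct.map (TensorProduct.map LinearMap.id A) LinearMap.id)
                (s ⊗ₜ[ℂ] w)))
          = (TensorProduct.map LinearMap.id ((LinearMap.mulRight ℂ w) ∘ₗ A)) s := by
      intro s
      induction s using TensorProduct.induction_on with
      | zero => simp only [_root_.map_zero, TensorProduct.zero_tmul]
      | tmul x y =>
          rw [show (TensorProduct.map (TensorProduct.map LinearMap.id A) LinearMap.id)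
                ((x ⊗ₜ[ℂ] y) ⊗ₜ[ℂ] w) = (x ⊗ₜ[ℂ] A y) ⊗ₜ[ℂ] w by
              rw [TensorProduct.map_tmul, TensorProduct.map_tmul]; rfl,
            show (TensorProduct.assoc ℂ B B B).toLinearMap
                ((x ⊗ₜ[ℂ] A y) ⊗ₜ[ℂ] w) = x ⊗ₜ[ℂ] ((A y) ⊗ₜ[ℂ] w) from
              TensorProduct.assoc_tmul x (A y) w,
            TensorProduct.map_tmul, TensorProduct.map_tmul]
          rfl
      | add s₁ s₂ h₁ h₂ =>
          simp only [TensorProduct.add_tmul, _root_.map_add]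
          rw [h₁, h₂]
    have h0 : Q (u ⊗ₜ[ℂ] w)
        = (TensorProduct.map LinearMap.id (LinearMap.mul' ℂ B))
            ((TensorProduct.assoc ℂ B B B).toLinearMap
              ((TensorProduct.map (TensorProduct.map LinearMap.id A) LinearMap.id)
                ((mdag u) ⊗ₜ[ℂ] w))) := by
      rw [hQdef]
      simp only [LinearMap.comp_apply]
      rw [show (TensorProduct.map mdag LinearMap.id) (u ⊗ₜ[ℂ] w) = (mdag u) ⊗ₜ[ℂ] w from
        TensorProduct.map_tmul mdag LinearMap.id u w]
    rw [h0, inner (mdag u)]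
  have Qgen : ∀ (f : B →ₗ[ℂ] B) (t : TensorProduct ℂ B B),
      Q ((TensorProduct.map LinearMap.id f) t)
        = (TensorProduct.map LinearMap.id
              (LinearMap.mul' ℂ B ∘ₗ TensorProduct.map A f))
            ((TensorProduct.assoc ℂ B B B).toLinearMap
              ((TensorProduct.map mdag LinearMap.id) t)) := by
    intro f t
    induction t using TensorProduct.induction_on with
    | zero => simp only [_root_.map_zero]
    | tmul p q =>
        rw [show (TensorProduct.map LinearMap.id f) (p ⊗ₜ[ℂ] q) = p ⊗ₜ[ℂ] f q from
            TensorProduct.map_tmul LinearMap.id f p q,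
          Qtmul p (f q),
          show (TensorProduct.map mdag LinearMap.id) (p ⊗ₜ[ℂ] q) = (mdag p) ⊗ₜ[ℂ] q from
            TensorProduct.map_tmul mdag LinearMap.id p q]
        have inner : ∀ s : TensorProduct ℂ B B,
            (TensorProduct.map LinearMap.id ((LinearMap.mulRight ℂ (f q)) ∘ₗ A)) s
              = (TensorProduct.map LinearMap.id
                    (LinearMap.mul' ℂ B ∘ₗ TensorProduct.map A f))
                  ((TensorProduct.assoc ℂ B B B).toLinearMap (s ⊗ₜ[ℂ] q)) := by
          intro s
          induction s using TensorProduct.induction_on with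
          | zero => simp only [_root_.map_zero, TensorProduct.zero_tmul]
          | tmul x y =>
              rw [TensorProduct.map_tmul,
                show (TensorProduct.assoc ℂ B B B).toLinearMap
                    ((x ⊗ₜ[ℂ] y) ⊗ₜ[ℂ] q) = x ⊗ₜ[ℂ] (y ⊗ₜ[ℂ] q) from
                  TensorProduct.assoc_tmul x y q,
                TensorProduct.map_tmul]
              rfl
          | add s₁ s₂ h₁ h₂ =>
              simp only [TensorProduct.add_tmul, _root_.map_add]
              rw [h₁, h₂]
        exact inner (mdag p)
    | add t₁ t₂ h₁ h₂ =>
        simp only [_root_.map_add]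
        rw [h₁, h₂]
  have Qx1 : ∀ x : B, Q (x ⊗ₜ[ℂ] (1 : B))
      = (TensorProduct.map LinearMap.id A) (mdag x) := by
    intro x
    rw [Qtmul x 1,
      show (LinearMap.mulRight ℂ (1 : B)) ∘ₗ A = A from by
        apply LinearMap.ext; intro y; simp]
  have Q1x : ∀ x : B, Q ((1 : B) ⊗ₜ[ℂ] x)
      = (TensorProduct.map Adag LinearMap.id) (mdag x) := by
    intro x; rw [Qtmul 1 x, keyG x]
  have hSchur' : ∀ y : B,
      (LinearMap.mul' ℂ B) ((TensorProduct.map A A) (mdag y)) = ((δ : ℂ) ^ 2) • A y := by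
    intro y
    have := congrArg (fun (F : B →ₗ[ℂ] B) => F y) hSchur
    simpa using this.symm
  have QQx1 : ∀ x : B, Q (Q (x ⊗ₜ[ℂ] (1 : B))) = ((δ : ℂ) ^ 2) • Q (x ⊗ₜ[ℂ] (1 : B)) := by
    intro x
    rw [Qx1 x, Qgen A (mdag x), coassoc x]
    have comp : ∀ t : TensorProduct ℂ B B,
        (TensorProduct.map LinearMap.id (LinearMap.mul' ℂ B ∘ₗ TensorProduct.map A A))
            ((TensorProduct.map LinearMap.id mdag) t)
          = ((δ : ℂ) ^ 2) • (TensorProduct.map LinearMap.id A) t := by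
      intro t
      induction t using TensorProduct.induction_on with
      | zero => simp only [_root_.map_zero, smul_zero]
      | tmul p q =>
          rw [show (TensorProduct.map LinearMap.id mdag) (p ⊗ₜ[ℂ] q) = p ⊗ₜ[ℂ] mdag q from
              TensorProduct.map_tmul LinearMap.id mdag p q,
            TensorProduct.map_tmul, TensorProduct.map_tmul]
          show p ⊗ₜ[ℂ] ((LinearMap.mul' ℂ B) ((TensorProduct.map A A) (mdag q)))
            = ((δ : ℂ) ^ 2) • (p ⊗ₜ[ℂ] A q)
          rw [hSchur' q, TensorProduct.tmul_smul]
      | add t₁ t₂ h₁ h₂ =>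
          simp only [_root_.map_add, smul_add]
          rw [h₁, h₂]
    rw [comp (mdag x), ← Qx1 x]
  have QQ1x : ∀ x : B, Q (Q ((1 : B) ⊗ₜ[ℂ] x)) = ((δ : ℂ) ^ 2) • Q ((1 : B) ⊗ₜ[ℂ] x) := by
    intro x
    have h1 : Q ((1 : B) ⊗ₜ[ℂ] x)
        = (TensorProduct.map LinearMap.id ((LinearMap.mulRight ℂ x) ∘ₗ A)) (mdag 1) :=
      Qtmul 1 x
    rw [h1, Qgen ((LinearMap.mulRight ℂ x) ∘ₗ A) (mdag 1), coassoc 1]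
    have comp : ∀ t : TensorProduct ℂ B B,
        (TensorProduct.map LinearMap.id
              (LinearMap.mul' ℂ B ∘ₗ TensorProduct.map A ((LinearMap.mulRight ℂ x) ∘ₗ A)))
            ((TensorProduct.map LinearMap.id mdag) t)
          = ((δ : ℂ) ^ 2) •
              (TensorProduct.map LinearMap.id ((LinearMap.mulRight ℂ x) ∘ₗ A)) t := by
      intro t
      induction t using TensorProduct.induction_on with
      | zero => simp only [_root_.map_zero, smul_zero]
      | tmul p q =>
          rw [show (TensorProduct.map LinearMap.id mdag) (p ⊗ₜ[ℂ] q) = p ⊗ₜ[ℂ] mdag q from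
              TensorProduct.map_tmul LinearMap.id mdag p q,
            TensorProduct.map_tmul, TensorProduct.map_tmul]
          show p ⊗ₜ[ℂ] ((LinearMap.mul' ℂ B)
              ((TensorProduct.map A ((LinearMap.mulRight ℂ x) ∘ₗ A)) (mdag q)))
            = ((δ : ℂ) ^ 2) • (p ⊗ₜ[ℂ] (A q * x))
          have hmove : ∀ s : TensorProduct ℂ B B,
              (LinearMap.mul' ℂ B)
                  ((TensorProduct.map A ((LinearMap.mulRight ℂ x) ∘ₗ A)) s)
                = ((LinearMap.mul' ℂ B) ((TensorProduct.map A A) s)) * x := by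
            intro s
            induction s using TensorProduct.induction_on with
            | zero => simp only [_root_.map_zero, zero_mul]
            | tmul u v =>
                rw [TensorProduct.map_tmul, TensorProduct.map_tmul]
                show A u * (A v * x) = (A u * A v) * x
                rw [mul_assoc]
            | add s₁ s₂ h₁ h₂ =>
                simp only [_root_.map_add, add_mul]
                rw [h₁, h₂]
          rw [hmove (mdag q), hSchur' q, smul_mul_assoc, TensorProduct.tmul_smul]
      | add t₁ t₂ h₁ h₂ =>
          simp only [_root_.map_add, smul_add]
          rw [h₁, h₂]
    rw [comp (mdag 1), ← h1]
  -- nabla in terms of Q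
  have hnablaQ : ∀ x : B,
      nabla x = (((δ : ℂ) ^ 2)⁻¹) • (Q ((1 : B) ⊗ₜ[ℂ] x) - Q (x ⊗ₜ[ℂ] (1 : B))) := by
    intro x
    rw [hnabla, Q1x x, Qx1 x]
    rfl
  have hδ2 : ((δ : ℂ) ^ 2) ≠ 0 := by
    refine pow_ne_zero 2 ?_
    exact_mod_cast hδ.ne'
  constructor
  · apply LinearMap.ext; intro x
    have hr : ((PA ∘ₗ ((TensorProduct.mk ℂ B B) 1 - (TensorProduct.mk ℂ B B).flip 1)) : B →ₗ[ℂ] TensorProduct ℂ B B) x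
        = PA ((1 : B) ⊗ₜ[ℂ] x - x ⊗ₜ[ℂ] (1 : B)) := rfl
    rw [hr, map_sub, hPAQ, hPAQ, ← smul_sub, hnablaQ x]
  · apply LinearMap.ext; intro x
    have hl : ((PA ∘ₗ nabla) : B →ₗ[ℂ] TensorProduct ℂ B B) x = PA (nabla x) := rfl
    rw [hl, hnablaQ x, map_smul, map_sub, hPAQ, hPAQ, QQ1x x, QQx1 x,
      smul_smul, smul_smul, inv_mul_cancel₀ hδ2]
    simp only [one_smul]
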